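/- Let G be a graph and S a stable set. For i ∈ S let N_1(i) = {j ∈ V \ S : N_S(j) = {i}} be the set of vertices whose only neighbor in S is i. Then χ^S/|S| is a local minimizer of f_G over Δ_n if and only if S is a maximal stable set and N_1(i) is a clique for every i ∈ S. -/

import Mathlib

open Matrix Finset
open scoped Classical

def IsStable {n : ℕ} (G : SimpleGraph (Fin n)) (S : Finset (Fin n)) : Prop :=
  ∀ i ∈ S, ∀ j ∈ S, ¬ G.Adj i j

noncomputable def alpha {n : ℕ} (G : SimpleGraph (Fin n)) : ℕ :=
  sSup {k | ∃ S : Finset (Fin n), IsStable G S ∧ S.card = k}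

noncomputable def indic {n : ℕ} (S : Finset (Fin n)) : Fin n → ℝ :=
  fun i => if i ∈ S then 1 else 0

noncomputable def qform {n : ℕ} (M : Matrix (Fin n) (Fin n) ℝ) (x : Fin n → ℝ) : ℝ :=
  x ⬝ᵥ M.mulVec x

noncomputable def fG {n : ℕ} (G : SimpleGraph (Fin n)) (x : Fin n → ℝ) : ℝ :=
  qform (1 + G.adjMatrix ℝ) x

noncomputable def globMin {n : ℕ} (f : (Fin n → ℝ) → ℝ) : Set (Fin n → ℝ) :=
  {x | x ∈ stdSimplex ℝ (Fin n) ∧ ∀ y ∈ stdSimplex ℝ (Fin n), f x ≤ f y}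

section Helpers

variable {n : ℕ}

lemma dot_swap (M : Matrix (Fin n) (Fin n) ℝ) (hM : M.IsSymm) (u v : Fin n → ℝ) :
    u ⬝ᵥ M.mulVec v = v ⬝ᵥ M.mulVec u := by
  simp only [dotProduct, Matrix.mulVec, dotProduct, Finset.mul_sum]
  rw [Finset.sum_comm]
  refine Finset.sum_congr rfl fun i _ => Finset.sum_congr rfl fun j _ => ?_
  rw [hM.apply i j]; ring

lemma qform_expand (M : Matrix (Fin n) (Fin n) ℝ) (hM : M.IsSymm) (x d : Fin n → ℝ) (ε : ℝ) :
    qform M (x + ε • d) = qform M x + 2*ε*(x ⬝ᵥ M.mulVec d) + ε^2 * qform M d := by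
  unfold qform
  simp only [Matrix.mulVec_add, Matrix.mulVec_smul, dotProduct_add, add_dotProduct,
    dotProduct_smul, smul_dotProduct, smul_eq_mul, dot_swap M hM d x]
  ring

lemma fG_eq (G : SimpleGraph (Fin n)) (x : Fin n → ℝ) :
    fG G x = ∑ v, x v * (x v + ∑ w, if G.Adj v w then x w else 0) := by
  unfold fG qform
  rw [Matrix.add_mulVec, Matrix.one_mulVec]
  simp [dotProduct, Matrix.mulVec, SimpleGraph.adjMatrix_apply, ite_mul, mul_add]

lemma Mval (G : SimpleGraph (Fin n)) (a b : Fin n) :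
    (1 + G.adjMatrix ℝ) a b = (if a = b then 1 else 0) + (if G.Adj a b then 1 else 0) := by
  simp [Matrix.one_apply]

lemma Msymm (G : SimpleGraph (Fin n)) : (1 + G.adjMatrix ℝ).IsSymm :=
  Matrix.IsSymm.add (Matrix.isSymm_one) (G.isSymm_adjMatrix)

end Helpers

theorem stmt_10 (n : ℕ) (G : SimpleGraph (Fin n)) (S : Finset (Fin n))
    (hS : IsStable G S) (hSne : S.Nonempty) :
    IsLocalMinOn (fG G) (stdSimplex ℝ (Fin n)) ((S.card : ℝ)⁻¹ • indic S) ↔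
      ((∀ j ∉ S, ∃ i ∈ S, G.Adj i j) ∧
        ∀ i ∈ S, G.IsClique {j | j ∉ S ∧ S.filter (fun s => G.Adj s j) = {i}}) := by
  classical
  have hs0 : 0 < (S.card : ℝ) := by exact_mod_cast Finset.card_pos.mpr hSne
  set c : ℝ := (S.card : ℝ)⁻¹ with hcdef
  have hc0 : 0 < c := inv_pos.mpr hs0
  set xs : Fin n → ℝ := (S.card : ℝ)⁻¹ • indic S with hxsdef
  set M : Matrix (Fin n) (Fin n) ℝ := 1 + G.adjMatrix ℝ with hMdef
  have hMsymm : M.IsSymm := Msymm G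
  have hxsv : ∀ v, xs v = if v ∈ S then c else 0 := by
    intro v
    simp [hxsdef, indic, mul_ite, ← hcdef]
  -- value of fG at xs
  have hfxs : fG G xs = c := by
    rw [fG_eq]
    have h1 : ∀ v, xs v * (xs v + ∑ w, if G.Adj v w then xs w else 0)
        = if v ∈ S then c * c else 0 := by
      intro v
      by_cases hv : v ∈ S
      · have hz : (∑ w, if G.Adj v w then xs w else 0) = 0 := by
          refine Finset.sum_eq_zero fun w _ => ?_
          by_cases hw : G.Adj v w
          · have hwS : w ∉ S := fun hwS => hS v hv w hwS hw
            simp [hw, hxsv, hwS]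
          · simp [hw]
        rw [hz, hxsv v]
        simp [hv]
      · simp [hxsv, hv]
    rw [Finset.sum_congr rfl fun v _ => h1 v]
    rw [Finset.sum_ite_mem, Finset.univ_inter, Finset.sum_const]
    simp only [nsmul_eq_mul]
    field_simp [hcdef]
    rw [hcdef]; exact mul_inv_cancel₀ (ne_of_gt hs0)
  -- xs in simplex
  have hxsS : xs ∈ stdSimplex ℝ (Fin n) := by
    constructor
    · intro v; rw [hxsv]; split <;> simp [le_of_lt hc0]
    · have : ∑ v, xs v = ∑ v, (if v ∈ S then c else 0) :=
        Finset.sum_congr rfl fun v _ => hxsv v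
      rw [this, Finset.sum_ite_mem, Finset.univ_inter, Finset.sum_const]
      simp only [nsmul_eq_mul]
      field_simp [hcdef]
      rw [hcdef]; exact mul_inv_cancel₀ (ne_of_gt hs0)
  -- column dot products
  have hcol : ∀ a : Fin n, xs ⬝ᵥ M.mulVec (Pi.single a 1)
      = c * ((if a ∈ S then 1 else 0) + ((S.filter (fun s => G.Adj s a)).card : ℝ)) := by
    intro a
    rw [Matrix.mulVec_single]
    simp only [mul_one, dotProduct, Pi.smul_apply, op_smul_eq_mul, Matrix.col_apply]
    have : ∀ v, xs v * M v a = if v ∈ S then c * M v a else 0 := by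
      intro v; rw [hxsv]; split <;> simp
    rw [Finset.sum_congr rfl fun v _ => this v, Finset.sum_ite_mem, Finset.univ_inter,
      ← Finset.mul_sum]
    congr 1
    have : ∀ v ∈ S, M v a = (if v = a then (1:ℝ) else 0) + (if G.Adj v a then 1 else 0) :=
      fun v _ => Mval G v a
    rw [Finset.sum_congr rfl this, Finset.sum_add_distrib]
    congr 1
    · rw [Finset.sum_ite_eq' S a (fun _ => (1:ℝ))]
    · rw [Finset.sum_boole]
  have hpair : ∀ a b : Fin n, (Pi.single a (1:ℝ)) ⬝ᵥ M.mulVec (Pi.single b 1) = M a b := by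
    intro a b
    rw [Matrix.mulVec_single]
    simp
  constructor
  · -- local min → maximal + cliques
    intro hloc
    have hev : ∀ᶠ y in nhdsWithin xs (stdSimplex ℝ (Fin n)), fG G xs ≤ fG G y := hloc
    rw [eventually_nhdsWithin_iff, Metric.eventually_nhds_iff] at hev
    obtain ⟨δ, hδ0, hball⟩ := hev
    constructor
    · -- maximality
      intro j hj
      by_contra hno
      push_neg at hno
      obtain ⟨i0, hi0⟩ := hSne
      have hji0 : j ≠ i0 := fun h => hj (h ▸ hi0)
      set ε : ℝ := min (δ/4) (c/2) with hεdef
      have hε0 : 0 < ε := lt_min (by linarith) (by linarith)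
      have hεδ : ε < δ := lt_of_le_of_lt (min_le_left _ _) (by linarith)
      have hεc : ε < c := lt_of_le_of_lt (min_le_right _ _) (by linarith)
      set d : Fin n → ℝ := Pi.single j 1 - Pi.single i0 1 with hddef
      set y : Fin n → ℝ := xs + ε • d with hydef
      -- compute fG y
      have hcolj : xs ⬝ᵥ M.mulVec (Pi.single j 1) = 0 := by
        rw [hcol]
        have : S.filter (fun s => G.Adj s j) = ∅ :=
          Finset.filter_false_of_mem (fun i hi => hno i hi)
        simp [hj, this]
      have hcoli : xs ⬝ᵥ M.mulVec (Pi.single i0 1) = c := by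
        rw [hcol]
        have : S.filter (fun s => G.Adj s i0) = ∅ :=
          Finset.filter_false_of_mem (fun i hi => hS i hi i0 hi0)
        simp [hi0, this]
      have hqd : qform M d = 2 := by
        unfold qform
        rw [hddef]
        simp only [Matrix.mulVec_sub, dotProduct_sub, sub_dotProduct, hpair]
        have h1 : M j j = 1 := by rw [hMdef, Mval]; simp
        have h2 : M i0 i0 = 1 := by rw [hMdef, Mval]; simp
        have h3 : M j i0 = 0 := by
          rw [hMdef, Mval]
          have : ¬ G.Adj j i0 := fun h => hno i0 hi0 h.symm
          simp [hji0, this]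
        have h4 : M i0 j = 0 := by
          rw [hMdef, Mval]
          have : ¬ G.Adj i0 j := hno i0 hi0
          simp [hji0.symm, this]
        rw [h1, h2, h3, h4]; ring
      have hfy : fG G y = c - 2*ε*c + ε^2*2 := by
        have : fG G y = qform M (xs + ε • d) := rfl
        rw [this, qform_expand M hMsymm, hqd]
        have : xs ⬝ᵥ M.mulVec d = -c := by
          rw [hddef, Matrix.mulVec_sub, dotProduct_sub, hcolj, hcoli]; ring
        rw [this]
        have : qform M xs = c := hfxs
        rw [this]; ring
      -- y in simplex
      have hymem : y ∈ stdSimplex ℝ (Fin n) := by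
        constructor
        · intro v
          rw [hydef]
          simp only [Pi.add_apply, Pi.smul_apply, hddef, Pi.sub_apply, smul_eq_mul]
          rw [hxsv]
          rcases eq_or_ne v j with rfl | hvj
          · simp [hj, Pi.single_apply, hji0]
            positivity
          · rcases eq_or_ne v i0 with rfl | hvi
            · simp [hi0, Pi.single_apply, hji0.symm]
              linarith
            · simp [Pi.single_apply, hvj, hvi]
              split <;> simp [le_of_lt hc0]
        · rw [hydef]
          simp only [Pi.add_apply]
          rw [Finset.sum_add_distrib]
          have h1 : ∑ v, xs v = 1 := hxsS.2
          have h2 : ∑ v, (ε • d) v = 0 := by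
            simp only [Pi.smul_apply, smul_eq_mul, ← Finset.mul_sum]
            have : ∑ v, d v = 0 := by
              rw [hddef]
              simp [Finset.sum_sub_distrib, Pi.single_apply]
            rw [this, mul_zero]
          rw [h1, h2, add_zero]
      -- dist bound
      have hdist : dist y xs < δ := by
        have hle : dist y xs ≤ ε := by
          rw [dist_pi_le_iff (le_of_lt hε0)]
          intro v
          rw [Real.dist_eq]
          have : y v - xs v = ε * d v := by
            rw [hydef]; simp only [Pi.add_apply, Pi.smul_apply, smul_eq_mul]; ring
          rw [this, abs_mul, abs_of_pos hε0]
          have : |d v| ≤ 1 := by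
            rw [hddef]
            simp only [Pi.sub_apply, Pi.single_apply]
            split <;> split <;> norm_num
          nlinarith
        linarith
      have := hball hdist hymem
      rw [hfxs, hfy] at this
      nlinarith
    · -- cliques
      intro i hi
      rw [SimpleGraph.isClique_iff]
      intro j hj k hk hjk
      by_contra hadj
      obtain ⟨hjS, hDj⟩ := hj
      obtain ⟨hkS, hDk⟩ := hk
      have hij : G.Adj i j := by
        have : i ∈ S.filter (fun s => G.Adj s j) := by rw [hDj]; exact Finset.mem_singleton_self i
        exact (Finset.mem_filter.mp this).2
      have hik : G.Adj i k := by
        have : i ∈ S.filter (fun s => G.Adj s k) := by rw [hDk]; exact Finset.mem_singleton_self i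
        exact (Finset.mem_filter.mp this).2
      have hij' : i ≠ j := fun h => hjS (h ▸ hi)
      have hik' : i ≠ k := fun h => hkS (h ▸ hi)
      set ε : ℝ := min (δ/4) (c/4) with hεdef
      have hε0 : 0 < ε := lt_min (by linarith) (by linarith)
      set d : Fin n → ℝ := Pi.single j (1:ℝ) + Pi.single k (1:ℝ)
        - (Pi.single i (1:ℝ) + Pi.single i (1:ℝ)) with hddef
      have hdv : ∀ v, d v = (if v = j then (1:ℝ) else 0) + (if v = k then 1 else 0)
          - ((if v = i then 1 else 0) + (if v = i then 1 else 0)) := by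
        intro v
        rw [hddef]
        simp [Pi.single_apply]
      set y : Fin n → ℝ := xs + ε • d with hydef
      have hxd : xs ⬝ᵥ M.mulVec d = 0 := by
        rw [hddef]
        simp only [Matrix.mulVec_sub, Matrix.mulVec_add, Matrix.mulVec_smul,
          dotProduct_sub, dotProduct_add, dotProduct_smul, smul_eq_mul, hcol]
        have hcj : (S.filter (fun s => G.Adj s j)).card = 1 := by rw [hDj]; simp
        have hck : (S.filter (fun s => G.Adj s k)).card = 1 := by rw [hDk]; simp
        have hci : S.filter (fun s => G.Adj s i) = ∅ :=
          Finset.filter_false_of_mem (fun v hv => hS v hv i hi)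
        rw [hcj, hck, hci]
        simp only [if_neg hjS, if_neg hkS, if_pos hi, Finset.card_empty, Nat.cast_one,
          Nat.cast_zero]
        ring
      have hqd : qform M d = -2 := by
        unfold qform
        rw [hddef]
        simp only [Matrix.mulVec_sub, Matrix.mulVec_add, Matrix.mulVec_smul,
          dotProduct_sub, dotProduct_add, dotProduct_smul, sub_dotProduct, add_dotProduct,
          smul_dotProduct, smul_eq_mul, hpair]
        have hjj : M j j = 1 := by rw [hMdef, Mval]; simp
        have hkk : M k k = 1 := by rw [hMdef, Mval]; simp
        have hii : M i i = 1 := by rw [hMdef, Mval]; simp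
        have hMjk : M j k = 0 := by rw [hMdef, Mval]; simp [hjk, hadj]
        have hMkj : M k j = 0 := by
          rw [hMdef, Mval]
          have h1 : ¬ G.Adj k j := fun h => hadj h.symm
          simp [hjk.symm, h1]
        have hMij : M i j = 1 := by rw [hMdef, Mval]; simp [hij', hij]
        have hMji : M j i = 1 := by rw [hMdef, Mval]; simp [hij'.symm, hij.symm]
        have hMik : M i k = 1 := by rw [hMdef, Mval]; simp [hik', hik]
        have hMki : M k i = 1 := by rw [hMdef, Mval]; simp [hik'.symm, hik.symm]
        simp only [hjj, hkk, hii, hMjk, hMkj, hMij, hMji, hMik, hMki]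
        ring
      have hfy : fG G y = c - 2*ε^2 := by
        have : fG G y = qform M (xs + ε • d) := rfl
        rw [this, qform_expand M hMsymm, hxd, hqd]
        have : qform M xs = c := hfxs
        rw [this]; ring
      have hymem : y ∈ stdSimplex ℝ (Fin n) := by
        constructor
        · intro v
          have hyv : y v = (if v ∈ S then c else 0) + ε * d v := by
            rw [hydef]
            simp only [Pi.add_apply, Pi.smul_apply, smul_eq_mul]
            rw [hxsv]
          rw [hyv, hdv v]
          by_cases hvi : v = i
          · subst hvi
            rw [if_pos hi, if_neg hij', if_neg hik', if_pos rfl]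
            have : ε ≤ c/4 := min_le_right _ _
            linarith
          · have h1 : (0:ℝ) ≤ ((if v = j then (1:ℝ) else 0) + (if v = k then 1 else 0))
                - ((if v = i then 1 else 0) + (if v = i then 1 else 0)) := by
              rw [if_neg hvi]
              split <;> split <;> norm_num
            have h2 : (0:ℝ) ≤ if v ∈ S then c else 0 := by
              split <;> simp [le_of_lt hc0]
            nlinarith [hε0]
        · rw [hydef]
          simp only [Pi.add_apply]
          rw [Finset.sum_add_distrib]
          have h1 : ∑ v, xs v = 1 := hxsS.2
          have h2 : ∑ v, (ε • d) v = 0 := by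
            simp only [Pi.smul_apply, smul_eq_mul, ← Finset.mul_sum]
            have : ∑ v, d v = 0 := by
              rw [Finset.sum_congr rfl fun v _ => hdv v]
              simp [Finset.sum_sub_distrib, Finset.sum_add_distrib, Finset.sum_ite_eq']
            rw [this, mul_zero]
          rw [h1, h2, add_zero]
      have hdist : dist y xs < δ := by
        have hle : dist y xs ≤ 2*ε := by
          rw [dist_pi_le_iff (by linarith)]
          intro v
          rw [Real.dist_eq]
          have : y v - xs v = ε * d v := by
            rw [hydef]; simp only [Pi.add_apply, Pi.smul_apply, smul_eq_mul]; ring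
          rw [this, abs_mul, abs_of_pos hε0]
          have : |d v| ≤ 2 := by
            rw [hdv v]
            split_ifs <;> norm_num
          nlinarith
        have : ε ≤ δ/4 := min_le_left _ _
        linarith
      have := hball hdist hymem
      rw [hfxs, hfy] at this
      nlinarith
  · -- maximal + cliques → local min
    rintro ⟨hmax, hclq⟩
    have hgoal : ∀ᶠ y in nhdsWithin xs (stdSimplex ℝ (Fin n)), fG G xs ≤ fG G y := by
      rw [eventually_nhdsWithin_iff, Metric.eventually_nhds_iff]
      refine ⟨c/2, by linarith, fun y hyd hymem => ?_⟩
      obtain ⟨hy0, hy1⟩ := hymem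
      rw [hfxs]
      -- coordinates of y on S are ≥ c/2
      have hyS : ∀ i ∈ S, c/2 ≤ y i := by
        intro i hiS
        have h1 : dist (y i) (xs i) ≤ dist y xs := dist_le_pi_dist y xs i
        rw [Real.dist_eq, hxsv i, if_pos hiS] at h1
        have := abs_le.mp (le_of_lt (lt_of_le_of_lt h1 hyd))
        linarith [this.1]
      -- definitions
      set D : Fin n → Finset (Fin n) := fun j => S.filter (fun s => G.Adj s j) with hDdef
      set B1 : Finset (Fin n) := Sᶜ.filter (fun j => (D j).card = 1) with hB1def
      set B2 : Finset (Fin n) := Sᶜ.filter (fun j => ¬ (D j).card = 1) with hB2def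
      set B1i : Fin n → Finset (Fin n) := fun i => Sᶜ.filter (fun j => D j = {i}) with hB1idef
      set t : Fin n → ℝ := fun i => ∑ j ∈ B1i i, y j with htdef
      set u : ℝ := ∑ j ∈ B2, y j with hudef
      set g : Fin n → ℝ := fun v => y v + ∑ w, if G.Adj v w then y w else 0 with hgdef
      have hDne : ∀ j ∈ Sᶜ, (D j).Nonempty := by
        intro j hj
        obtain ⟨i, hiS, hadj⟩ := hmax j (Finset.mem_compl.mp hj)
        exact ⟨i, Finset.mem_filter.mpr ⟨hiS, hadj⟩⟩
      have hB2card : ∀ j ∈ B2, 2 ≤ (D j).card := by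
        intro j hj
        obtain ⟨hjc, hne⟩ := Finset.mem_filter.mp hj
        have h1 : 1 ≤ (D j).card := Finset.card_pos.mpr (hDne j hjc)
        omega
      -- splitting sums
      have hsplit : ∀ F : Fin n → ℝ,
          ∑ v, F v = ∑ v ∈ S, F v + (∑ j ∈ B1, F j + ∑ j ∈ B2, F j) := by
        intro F
        rw [← Finset.sum_add_sum_compl S F]
        congr 1
        rw [hB1def, hB2def]
        exact (Finset.sum_filter_add_sum_filter_not Sᶜ _ F).symm
      have hB1eq : B1 = S.biUnion B1i := by
        ext j
        simp only [hB1def, hB1idef, Finset.mem_filter, Finset.mem_biUnion]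
        constructor
        · rintro ⟨hjc, hcard⟩
          obtain ⟨a, ha⟩ := Finset.card_eq_one.mp hcard
          have haS : a ∈ S := by
            have : a ∈ D j := ha ▸ Finset.mem_singleton_self a
            exact Finset.mem_of_mem_filter a this
          exact ⟨a, haS, hjc, ha⟩
        · rintro ⟨a, _, hjc, ha⟩
          exact ⟨hjc, by rw [ha]; simp⟩
      have hdisj : (S : Set (Fin n)).PairwiseDisjoint B1i := by
        intro a _ b _ hab
        simp only [Function.onFun]
        rw [Finset.disjoint_left]
        intro j hja hjb
        have h1 : D j = {a} := (Finset.mem_filter.mp hja).2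
        have h2 : D j = {b} := (Finset.mem_filter.mp hjb).2
        exact hab (Finset.singleton_injective (h1 ▸ h2))
      have hB1split : ∀ F : Fin n → ℝ, ∑ j ∈ B1, F j = ∑ i ∈ S, ∑ j ∈ B1i i, F j := by
        intro F
        rw [hB1eq, Finset.sum_biUnion hdisj]
      -- membership facts
      have hadjB1 : ∀ i, ∀ j ∈ B1i i, G.Adj i j := by
        intro i j hj
        have h1 : D j = {i} := (Finset.mem_filter.mp hj).2
        have : i ∈ D j := h1 ▸ Finset.mem_singleton_self i
        exact (Finset.mem_filter.mp this).2
      have hB1iS : ∀ i, ∀ j ∈ B1i i, j ∉ S := by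
        intro i j hj
        exact Finset.mem_compl.mp (Finset.mem_of_mem_filter j hj)
      -- fG as sum of rows
      rw [fG_eq]
      have hrow : ∀ v, y v * (y v + ∑ w, if G.Adj v w then y w else 0) = y v * g v := by
        intro v; rfl
      rw [Finset.sum_congr rfl fun v _ => hrow v]
      rw [hsplit (fun v => y v * g v)]
      -- Row bound for i in S
      have hrowS : ∀ i ∈ S,
          y i * (y i + t i) + (c/2) * (∑ j ∈ B2, if G.Adj i j then y j else 0) ≤ y i * g i := by
        intro i hiS
        obtain ⟨σ, hσdef⟩ : ∃ s', s' = ∑ j ∈ B2, (if G.Adj i j then y j else 0) := ⟨_, rfl⟩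
        rw [← hσdef]
        have hσ' : σ = ∑ j ∈ B2.filter (fun j => G.Adj i j), y j :=
          hσdef.trans (Finset.sum_filter _ _).symm
        have hdisj2 : Disjoint (B1i i) (B2.filter (fun j => G.Adj i j)) := by
          rw [Finset.disjoint_left]
          intro j hj1 hj2
          have h1 : D j = {i} := (Finset.mem_filter.mp hj1).2
          have h2 : ¬ (D j).card = 1 := (Finset.mem_filter.mp (Finset.mem_of_mem_filter j hj2)).2
          exact h2 (by rw [h1]; simp)
        have hsub : B1i i ∪ B2.filter (fun j => G.Adj i j) ⊆ univ.filter (fun w => G.Adj i w) := by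
          intro j hj
          rcases Finset.mem_union.mp hj with hj | hj
          · exact Finset.mem_filter.mpr ⟨Finset.mem_univ j, hadjB1 i j hj⟩
          · exact Finset.mem_filter.mpr ⟨Finset.mem_univ j, (Finset.mem_filter.mp hj).2⟩
        have hbound : t i + σ ≤ ∑ w, if G.Adj i w then y w else 0 := by
          rw [hσ', htdef]
          rw [← Finset.sum_union hdisj2]
          have h2 : (∑ w, if G.Adj i w then y w else 0)
              = ∑ w ∈ univ.filter (fun w => G.Adj i w), y w := (Finset.sum_filter _ _).symm
          rw [h2]
          exact Finset.sum_le_sum_of_subset_of_nonneg hsub (fun j _ _ => hy0 j)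
        have hgi : y i + t i + σ ≤ g i := by
          have hgid : g i = y i + ∑ w, if G.Adj i w then y w else 0 := rfl
          rw [hgid]
          linarith
        have h1 : y i * (y i + t i + σ) ≤ y i * g i :=
          mul_le_mul_of_nonneg_left hgi (hy0 i)
        have hσ0 : 0 ≤ σ := by
          rw [hσdef]
          refine Finset.sum_nonneg fun j _ => ?_
          split <;> [exact hy0 j; exact le_refl 0]
        have h2 : (c/2) * σ ≤ y i * σ := mul_le_mul_of_nonneg_right (hyS i hiS) hσ0
        calc y i * (y i + t i) + (c/2) * σ
            ≤ y i * (y i + t i) + y i * σ := add_le_add_right h2 _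
          _ = y i * (y i + t i + σ) := by ring
          _ ≤ y i * g i := h1
      -- Row bound for j in B1i i
      have hrowB1 : ∀ i ∈ S, ∀ j ∈ B1i i, y j * (y i + t i) ≤ y j * g j := by
        intro i hiS j hj
        have hjS' : j ∉ S := hB1iS i j hj
        have hij : G.Adj i j := hadjB1 i j hj
        have hiB : i ∉ (B1i i).erase j := by
          intro h
          exact (hB1iS i i (Finset.mem_of_mem_erase h)) hiS
        have hsub : insert i ((B1i i).erase j) ⊆ univ.filter (fun w => G.Adj j w) := by
          intro w hw
          rcases Finset.mem_insert.mp hw with rfl | hw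
          · exact Finset.mem_filter.mpr ⟨Finset.mem_univ w, hij.symm⟩
          · have hwB : w ∈ B1i i := Finset.mem_of_mem_erase hw
            have hwj : w ≠ j := Finset.ne_of_mem_erase hw
            have hjmem : j ∈ {j' | j' ∉ S ∧ S.filter (fun s => G.Adj s j') = {i}} :=
              ⟨hjS', (Finset.mem_filter.mp hj).2⟩
            have hwmem : w ∈ {j' | j' ∉ S ∧ S.filter (fun s => G.Adj s j') = {i}} :=
              ⟨hB1iS i w hwB, (Finset.mem_filter.mp hwB).2⟩
            have := hclq i hiS hjmem hwmem (fun h => hwj h.symm)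
            exact Finset.mem_filter.mpr ⟨Finset.mem_univ w, this⟩
        have hbound : y i + (t i - y j) ≤ ∑ w, if G.Adj j w then y w else 0 := by
          have h2 : (∑ w, if G.Adj j w then y w else 0)
              = ∑ w ∈ univ.filter (fun w => G.Adj j w), y w := (Finset.sum_filter _ _).symm
          rw [h2]
          have h3 : ∑ w ∈ insert i ((B1i i).erase j), y w = y i + (t i - y j) := by
            rw [Finset.sum_insert hiB]
            congr 1
            rw [htdef]
            exact Finset.sum_erase_eq_sub hj
          rw [← h3]
          exact Finset.sum_le_sum_of_subset_of_nonneg hsub (fun v _ _ => hy0 v)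
        have hgj : y i + t i ≤ g j := by
          have hgjd : g j = y j + ∑ w, if G.Adj j w then y w else 0 := rfl
          rw [hgjd]
          linarith
        exact mul_le_mul_of_nonneg_left hgj (hy0 j)
      -- Row bound for j in B2
      have hrowB2 : ∀ j ∈ B2, y j * c ≤ y j * g j := by
        intro j hj
        have hsub : D j ⊆ univ.filter (fun w => G.Adj j w) := by
          intro i hi
          exact Finset.mem_filter.mpr ⟨Finset.mem_univ i, ((Finset.mem_filter.mp hi).2).symm⟩
        have he : (∑ w, if G.Adj j w then y w else 0)
            = ∑ w ∈ univ.filter (fun w => G.Adj j w), y w := (Finset.sum_filter _ _).symm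
        have h1 : ∑ i ∈ D j, y i ≤ ∑ w, if G.Adj j w then y w else 0 := by
          rw [he]
          exact Finset.sum_le_sum_of_subset_of_nonneg hsub (fun v _ _ => hy0 v)
        have h2 : ((D j).card : ℝ) * (c/2) ≤ ∑ i ∈ D j, y i := by
          have h2' : ∑ _i ∈ D j, (c/2) ≤ ∑ i ∈ D j, y i :=
            Finset.sum_le_sum fun i hi => hyS i (Finset.mem_of_mem_filter i hi)
          simpa [Finset.sum_const, nsmul_eq_mul, mul_comm] using h2'
        have h3 : (2:ℝ) ≤ ((D j).card : ℝ) := by exact_mod_cast hB2card j hj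
        have h4 : (2:ℝ)*(c/2) ≤ ((D j).card : ℝ) * (c/2) :=
          mul_le_mul_of_nonneg_right h3 (by linarith)
        have hgj : c ≤ g j := by
          have hgjd : g j = y j + ∑ w, if G.Adj j w then y w else 0 := rfl
          rw [hgjd]
          linarith [hy0 j]
        exact mul_le_mul_of_nonneg_left hgj (hy0 j)
      -- sum of sigma over S
      have hσsum : 2*u ≤ ∑ i ∈ S, ∑ j ∈ B2, (if G.Adj i j then y j else 0) := by
        rw [Finset.sum_comm]
        rw [hudef, Finset.mul_sum]
        refine Finset.sum_le_sum fun j hj => ?_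
        have h1 : ∑ i ∈ S, (if G.Adj i j then y j else 0)
            = ∑ i ∈ S.filter (fun i => G.Adj i j), y j := (Finset.sum_filter _ _).symm
        rw [h1, Finset.sum_const, nsmul_eq_mul]
        have h2 : (2:ℝ) ≤ ((S.filter (fun i => G.Adj i j)).card : ℝ) := by
          have := hB2card j hj
          rw [hDdef] at this
          exact_mod_cast this
        nlinarith [hy0 j, h2]
      -- Cauchy-Schwarz
      have hPsum : ∑ i ∈ S, (y i + t i) = 1 - u := by
        have h0 := hsplit y
        rw [hy1] at h0
        rw [Finset.sum_add_distrib]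
        have h1 : ∑ i ∈ S, t i = ∑ j ∈ B1, y j := (hB1split y).symm
        rw [h1, hudef]
        linarith
      have hCS : (1-u)^2 ≤ (S.card : ℝ) * ∑ i ∈ S, (y i + t i)^2 := by
        rw [← hPsum]
        exact_mod_cast sq_sum_le_card_mul_sum_sq (s := S) (f := fun i => y i + t i)
      have hsq : c * (1-u)^2 ≤ ∑ i ∈ S, (y i + t i)^2 := by
        have h1 : c * (1-u)^2 ≤ c * ((S.card : ℝ) * ∑ i ∈ S, (y i + t i)^2) :=
          mul_le_mul_of_nonneg_left hCS (le_of_lt hc0)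
        have h2 : c * ((S.card : ℝ) * ∑ i ∈ S, (y i + t i)^2) = ∑ i ∈ S, (y i + t i)^2 := by
          rw [← mul_assoc, hcdef, inv_mul_cancel₀ (ne_of_gt hs0), one_mul]
        linarith
      -- combine
      have hS' : ∑ i ∈ S, (y i * (y i + t i) + (c/2) * (∑ j ∈ B2, if G.Adj i j then y j else 0))
          ≤ ∑ i ∈ S, y i * g i := Finset.sum_le_sum hrowS
      have hB1' : ∑ i ∈ S, ∑ j ∈ B1i i, y j * (y i + t i) ≤ ∑ j ∈ B1, y j * g j := by
        rw [hB1split (fun j => y j * g j)]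
        exact Finset.sum_le_sum fun i hiS => Finset.sum_le_sum (hrowB1 i hiS)
      have hB2' : u * c ≤ ∑ j ∈ B2, y j * g j := by
        rw [hudef, Finset.sum_mul]
        exact Finset.sum_le_sum hrowB2
      have hSexp : ∑ i ∈ S, (y i * (y i + t i) + (c/2) * (∑ j ∈ B2, if G.Adj i j then y j else 0))
          = ∑ i ∈ S, y i * (y i + t i)
            + (c/2) * ∑ i ∈ S, ∑ j ∈ B2, (if G.Adj i j then y j else 0) := by
        rw [Finset.sum_add_distrib, Finset.mul_sum]
      have hB1exp : ∑ i ∈ S, ∑ j ∈ B1i i, y j * (y i + t i)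
          = ∑ i ∈ S, t i * (y i + t i) := by
        refine Finset.sum_congr rfl fun i _ => ?_
        rw [htdef, Finset.sum_mul]
      have hsq2 : ∑ i ∈ S, (y i * (y i + t i)) + ∑ i ∈ S, (t i * (y i + t i))
          = ∑ i ∈ S, (y i + t i)^2 := by
        rw [← Finset.sum_add_distrib]
        refine Finset.sum_congr rfl fun i _ => ?_
        ring
      have hσpos : (c/2) * (2*u) ≤ (c/2) * ∑ i ∈ S, ∑ j ∈ B2, (if G.Adj i j then y j else 0) :=
        mul_le_mul_of_nonneg_left hσsum (by linarith)
      have hu0 : 0 ≤ u := Finset.sum_nonneg fun j _ => hy0 j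
      have hring : c * (1-u)^2 + (c/2)*(2*u) + u*c = c + c*u^2 := by ring
      have hcu : 0 ≤ c * u^2 := mul_nonneg (le_of_lt hc0) (sq_nonneg u)
      linarith [hS', hB1', hB2', hsq, hσpos, hSexp, hB1exp, hsq2, hring, hcu]
    exact hgoal
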